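/- Uniqueness of the AIL minimizer on the support: if a belief-conditional policy π* attains the minimum of the map π ↦ ∑_{(s,b)∈S×B} d(s,b)·KL(π_θ(·|s) ‖ π(·|b)) over all belief-conditional policies π : B → pmf(A), then π*(·|b) = π̂(·|b) for every b ∈ B with d(b) > 0. -/

import Mathlib

open scoped BigOperators ENNReal Classical

noncomputable section

/-- A probability mass function on a finite type. -/
def IsPmf {X : Type*} [Fintype X] (p : X → ℝ) : Prop :=
  (∀ x, 0 ≤ p x) ∧ ∑ x, p x = 1

/-- Kullback–Leibler divergence between two pmfs on a finite type, valued in `[0, ∞]`,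
with the conventions `0 * log (0 / q a) = 0` and `KL(p‖q) = ∞` whenever
`p a > 0 = q a` for some `a`. -/
def klDiv {A : Type*} [Fintype A] (p q : A → ℝ) : ℝ≥0∞ :=
  if ∀ a, q a = 0 → p a = 0 then ENNReal.ofReal (∑ a, p a * Real.log (p a / q a)) else ⊤

lemma gibbs {A : Type*} [Fintype A] (p q : A → ℝ) (hp : IsPmf p) (hq : IsPmf q)
    (hac : ∀ a, q a = 0 → p a = 0) :
    0 ≤ ∑ a, p a * Real.log (p a / q a) ∧
      ((∑ a, p a * Real.log (p a / q a)) = 0 → p = q) := by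
  set g : A → ℝ := fun a => p a * Real.log (p a / q a) - p a + q a with hg
  have hgnn : ∀ a, 0 ≤ g a := by
    intro a
    by_cases hpa : p a = 0
    · simp [hg, hpa, hq.1 a]
    · have hpa' : 0 < p a := (hp.1 a).lt_of_ne (Ne.symm hpa)
      have hqa' : 0 < q a := by
        rcases (hq.1 a).lt_or_eq with h | h
        · exact h
        · exact absurd (hac a h.symm) hpa
      have hlog := Real.log_le_sub_one_of_pos (div_pos hqa' hpa')
      have hinv : Real.log (p a / q a) = - Real.log (q a / p a) := by
        rw [← Real.log_inv, inv_div]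
      have hmul := mul_le_mul_of_nonneg_left hlog hpa'.le
      simp only [hg]
      rw [hinv]
      have : p a * (q a / p a - 1) = q a - p a := by field_simp
      nlinarith
  have hsum : ∑ a, g a = ∑ a, p a * Real.log (p a / q a) := by
    simp [hg, Finset.sum_add_distrib, Finset.sum_sub_distrib, hp.2, hq.2]
  constructor
  · have := Finset.sum_nonneg (s := Finset.univ) (fun a _ => hgnn a)
    rw [hsum] at this; exact this
  · intro h0
    have hz : ∀ a ∈ Finset.univ, g a = 0 := by
      rw [← Finset.sum_eq_zero_iff_of_nonneg (fun a _ => hgnn a), hsum]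
      exact h0
    funext a
    have hga := hz a (Finset.mem_univ a)
    by_cases hpa : p a = 0
    · have : q a = 0 := by simpa [hg, hpa] using hga
      rw [hpa, this]
    · have hpa' : 0 < p a := (hp.1 a).lt_of_ne (Ne.symm hpa)
      have hqa' : 0 < q a := by
        rcases (hq.1 a).lt_or_eq with h | h
        · exact h
        · exact absurd (hac a h.symm) hpa
      by_contra hne
      have hne' : q a / p a ≠ 1 := by
        intro h
        have := (div_eq_one_iff_eq hpa).mp h
        exact hne this.symm
      have hlog := Real.log_lt_sub_one_of_pos (div_pos hqa' hpa') hne'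
      have hinv : Real.log (p a / q a) = - Real.log (q a / p a) := by
        rw [← Real.log_inv, inv_div]
      have hmul := mul_lt_mul_of_pos_left hlog hpa'
      simp only [hg] at hga
      rw [hinv] at hga
      have : p a * (q a / p a - 1) = q a - p a := by field_simp
      nlinarith

lemma comp_identity {S A : Type*} [Fintype S] [Fintype A]
    (c : S → ℝ) (hc : ∀ s, 0 ≤ c s) (w : ℝ) (hw : 0 < w) (hwsum : ∑ s, c s = w)
    (p : S → A → ℝ) (hp : ∀ s, IsPmf (p s))
    (pbar : A → ℝ) (hpbar : ∀ a, pbar a = ∑ s, c s / w * p s a)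
    (q : A → ℝ) (hq0 : ∀ a, 0 ≤ q a)
    (hq1 : ∀ s, c s ≠ 0 → ∀ a, q a = 0 → p s a = 0) :
    ∑ s, c s * (∑ a, p s a * Real.log (p s a / q a))
      = ∑ s, c s * (∑ a, p s a * Real.log (p s a / pbar a))
        + w * ∑ a, pbar a * Real.log (pbar a / q a) := by
  have key : ∀ s, c s * (∑ a, p s a * Real.log (p s a / q a))
      - c s * (∑ a, p s a * Real.log (p s a / pbar a))
      = ∑ a, c s * p s a * Real.log (pbar a / q a) := by
    intro s
    by_cases hcs : c s = 0
    · simp [hcs]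
    · have hcs' : 0 < c s := (hc s).lt_of_ne (Ne.symm hcs)
      rw [← mul_sub, ← Finset.sum_sub_distrib, Finset.mul_sum]
      refine Finset.sum_congr rfl (fun a _ => ?_)
      by_cases hpa : p s a = 0
      · simp [hpa]
      · have hpa' : 0 < p s a := ((hp s).1 a).lt_of_ne (Ne.symm hpa)
        have hqa' : 0 < q a := by
          rcases (hq0 a).lt_or_eq with h | h
          · exact h
          · exact absurd (hq1 s hcs a h.symm) hpa
        have hbar' : 0 < pbar a := by
          rw [hpbar a]
          have h1 : c s / w * p s a ≤ ∑ s', c s' / w * p s' a :=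
            Finset.single_le_sum (f := fun s' => c s' / w * p s' a)
              (fun s' _ => mul_nonneg (div_nonneg (hc s') hw.le) ((hp s').1 a))
              (Finset.mem_univ s)
          have h2 : 0 < c s / w * p s a := mul_pos (div_pos hcs' hw) hpa'
          linarith
        rw [← mul_sub, Real.log_div hpa'.ne' hqa'.ne', Real.log_div hpa'.ne' hbar'.ne',
          Real.log_div hbar'.ne' hqa'.ne']
        ring
  have hswap : ∑ s, ∑ a, c s * p s a * Real.log (pbar a / q a)
      = w * ∑ a, pbar a * Real.log (pbar a / q a) := by
    rw [Finset.sum_comm, Finset.mul_sum]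
    refine Finset.sum_congr rfl (fun a _ => ?_)
    have : ∑ s, c s * p s a = w * pbar a := by
      rw [hpbar a, Finset.mul_sum]
      refine Finset.sum_congr rfl (fun s _ => ?_)
      field_simp
    rw [← Finset.sum_mul, this]
    ring
  have := Finset.sum_congr rfl (fun s (_ : s ∈ Finset.univ) => key s)
  rw [Finset.sum_sub_distrib] at this
  rw [hswap] at this
  linarith

/-- Uniqueness of the AIL minimizer on the support: any belief-conditional policy
attaining the minimum of the AIL objective agrees with the implicit policy at every
belief state of positive marginal mass. -/
theorem ail_minimizer_unique_on_support
    {S B A : Type*} [Fintype S] [Fintype B] [Fintype A]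
    [Nonempty S] [Nonempty B] [Nonempty A]
    (d : S × B → ℝ) (hd : IsPmf d)
    (πθ : S → A → ℝ) (hπθ : ∀ s, IsPmf (πθ s))
    (dB : B → ℝ) (hdB : ∀ b, dB b = ∑ s, d (s, b))
    (πhat : B → A → ℝ)
    (hπhat_pos : ∀ b, 0 < dB b → ∀ a, πhat b a = ∑ s, d (s, b) / dB b * πθ s a)
    (hπhat_zero : ∀ b, dB b = 0 → ∀ a, πhat b a = 1 / (Fintype.card A : ℝ))
    (πstar : B → A → ℝ) (hπstar : ∀ b, IsPmf (πstar b))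
    (hmin : ∀ π : B → A → ℝ, (∀ b, IsPmf (π b)) →
      (∑ x : S × B, ENNReal.ofReal (d x) * klDiv (πθ x.1) (πstar x.2))
        ≤ ∑ x : S × B, ENNReal.ofReal (d x) * klDiv (πθ x.1) (π x.2)) :
    ∀ b, 0 < dB b → πstar b = πhat b := by
  intro b0 hb0
  have hd0 : ∀ x, 0 ≤ d x := hd.1
  have hdB0 : ∀ b, 0 ≤ dB b := fun b => by
    rw [hdB b]; exact Finset.sum_nonneg (fun s _ => hd0 (s, b))
  -- πhat is a pmf for each b
  have hπhatPmf : ∀ b, IsPmf (πhat b) := by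
    intro b
    rcases (hdB0 b).lt_or_eq with h | h
    · constructor
      · intro a
        rw [hπhat_pos b h a]
        exact Finset.sum_nonneg (fun s _ =>
          mul_nonneg (div_nonneg (hd0 (s, b)) (hdB0 b)) ((hπθ s).1 a))
      · have : ∑ a, πhat b a = ∑ a, ∑ s, d (s, b) / dB b * πθ s a :=
          Finset.sum_congr rfl (fun a _ => hπhat_pos b h a)
        rw [this, Finset.sum_comm]
        have : ∀ s, ∑ a, d (s, b) / dB b * πθ s a = d (s, b) / dB b := by
          intro s
          rw [← Finset.mul_sum, (hπθ s).2, mul_one]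
        rw [Finset.sum_congr rfl (fun s _ => this s), ← Finset.sum_div, ← hdB b,
          div_self h.ne']
    · constructor
      · intro a
        rw [hπhat_zero b h.symm a]
        positivity
      · have hcard : (0 : ℝ) < (Fintype.card A : ℝ) := by
          exact_mod_cast Fintype.card_pos
        rw [Finset.sum_congr rfl (fun a _ => hπhat_zero b h.symm a)]
        rw [Finset.sum_const, Finset.card_univ, nsmul_eq_mul]
        field_simp
  -- absolute continuity of πθ s wrt πhat b on the support
  have hacHat : ∀ s b, d (s, b) ≠ 0 → ∀ a, πhat b a = 0 → πθ s a = 0 := by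
    intro s b hds a ha
    have hds' : 0 < d (s, b) := (hd0 (s, b)).lt_of_ne (Ne.symm hds)
    have hdBb : 0 < dB b := by
      rw [hdB b]
      have := Finset.single_le_sum (f := fun s' => d (s', b))
        (fun s' _ => hd0 (s', b)) (Finset.mem_univ s)
      linarith
    rw [hπhat_pos b hdBb a] at ha
    have := (Finset.sum_eq_zero_iff_of_nonneg (fun s' (_ : s' ∈ Finset.univ) =>
      mul_nonneg (div_nonneg (hd0 (s', b)) (hdB0 b)) ((hπθ s').1 a))).mp ha s
      (Finset.mem_univ s)
    rcases mul_eq_zero.mp this with h | h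
    · exact absurd h (div_ne_zero hds'.ne' hdBb.ne')
    · exact h
  -- F(πhat) is finite
  have hhatfin : ∀ x : S × B, ENNReal.ofReal (d x) * klDiv (πθ x.1) (πhat x.2) ≠ ⊤ := by
    rintro ⟨s, b⟩
    by_cases hdx : d (s, b) = 0
    · simp [hdx]
    · have : klDiv (πθ s) (πhat b) = ENNReal.ofReal (∑ a, πθ s a * Real.log (πθ s a / πhat b a)) := by
        rw [klDiv, if_pos (fun a h => hacHat s b hdx a h)]
      rw [this]
      exact ENNReal.mul_ne_top ENNReal.ofReal_ne_top ENNReal.ofReal_ne_top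
  have hFhatfin : (∑ x : S × B, ENNReal.ofReal (d x) * klDiv (πθ x.1) (πhat x.2)) ≠ ⊤ := by
    exact (ENNReal.sum_lt_top.mpr (fun x _ => lt_top_iff_ne_top.mpr (hhatfin x))).ne
  have hFstar_le := hmin πhat hπhatPmf
  have hstarfin : ∀ x : S × B, ENNReal.ofReal (d x) * klDiv (πθ x.1) (πstar x.2) ≠ ⊤ := by
    intro x
    have hle : ENNReal.ofReal (d x) * klDiv (πθ x.1) (πstar x.2)
        ≤ ∑ y : S × B, ENNReal.ofReal (d y) * klDiv (πθ y.1) (πstar y.2) :=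
      Finset.single_le_sum (f := fun y : S × B => ENNReal.ofReal (d y) * klDiv (πθ y.1) (πstar y.2)) (fun y _ => zero_le) (Finset.mem_univ x)
    exact ne_top_of_le_ne_top (ne_top_of_le_ne_top hFhatfin hFstar_le) hle
  -- absolute continuity of πθ s wrt πstar b on the support
  have hacStar : ∀ s b, d (s, b) ≠ 0 → ∀ a, πstar b a = 0 → πθ s a = 0 := by
    intro s b hds
    by_contra h
    push_neg at h
    obtain ⟨a, ha1, ha2⟩ := h
    have hne : klDiv (πθ s) (πstar b) = ⊤ := by
      rw [klDiv, if_neg]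
      push_neg
      exact ⟨a, ha1, ha2⟩
    have hds' : 0 < d (s, b) := (hd0 (s, b)).lt_of_ne (Ne.symm hds)
    refine hstarfin (s, b) ?_
    show ENNReal.ofReal (d (s, b)) * klDiv (πθ s) (πstar b) = ⊤
    rw [hne, ENNReal.mul_top (by simp [ENNReal.ofReal_eq_zero]; linarith)]
  -- perturbation at b0
  set π' : B → A → ℝ := Function.update πstar b0 (πhat b0) with hπ'def
  have hπ'Pmf : ∀ b, IsPmf (π' b) := by
    intro b
    by_cases hb : b = b0
    · subst hb; rw [hπ'def, Function.update_self]; exact hπhatPmf b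
    · rw [hπ'def, Function.update_of_ne hb]; exact hπstar b
  have hmin' := hmin π' hπ'Pmf
  -- group sums by b
  set Tstar : B → ℝ≥0∞ := fun b => ∑ s, ENNReal.ofReal (d (s, b)) * klDiv (πθ s) (πstar b)
    with hTstardef
  set T' : B → ℝ≥0∞ := fun b => ∑ s, ENNReal.ofReal (d (s, b)) * klDiv (πθ s) (π' b)
    with hT'def
  have hgroup1 : (∑ x : S × B, ENNReal.ofReal (d x) * klDiv (πθ x.1) (πstar x.2))
      = ∑ b, Tstar b := by
    rw [Fintype.sum_prod_type_right]
  have hgroup2 : (∑ x : S × B, ENNReal.ofReal (d x) * klDiv (πθ x.1) (π' x.2))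
      = ∑ b, T' b := by
    rw [Fintype.sum_prod_type_right]
  rw [hgroup1, hgroup2] at hmin'
  have hTstarfin : ∀ b, Tstar b ≠ ⊤ := by
    intro b
    exact (ENNReal.sum_lt_top.mpr (fun s _ =>
      lt_top_iff_ne_top.mpr (hstarfin (s, b)))).ne
  have herase : ∑ b ∈ Finset.univ.erase b0, Tstar b = ∑ b ∈ Finset.univ.erase b0, T' b := by
    refine Finset.sum_congr rfl (fun b hb => ?_)
    have hbne : b ≠ b0 := (Finset.mem_erase.mp hb).1
    simp only [hTstardef, hT'def, hπ'def, Function.update_of_ne hbne]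
  have herasefin : (∑ b ∈ Finset.univ.erase b0, Tstar b) ≠ ⊤ :=
    (ENNReal.sum_lt_top.mpr (fun b _ => lt_top_iff_ne_top.mpr (hTstarfin b))).ne
  have hT0 : Tstar b0 ≤ T' b0 := by
    rw [← Finset.sum_erase_add _ _ (Finset.mem_univ b0),
      ← Finset.sum_erase_add _ _ (Finset.mem_univ b0), herase] at hmin'
    exact (ENNReal.add_le_add_iff_left (herase ▸ herasefin)).mp hmin'
  have hT'b0 : T' b0 = ∑ s, ENNReal.ofReal (d (s, b0)) * klDiv (πθ s) (πhat b0) := by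
    simp only [hT'def, hπ'def, Function.update_self]
  rw [hT'b0] at hT0
  -- real versions
  set c : S → ℝ := fun s => d (s, b0) with hcdef
  have hc0 : ∀ s, 0 ≤ c s := fun s => hd0 (s, b0)
  set rstar : S → ℝ := fun s => ∑ a, πθ s a * Real.log (πθ s a / πstar b0 a) with hrstardef
  set rhat : S → ℝ := fun s => ∑ a, πθ s a * Real.log (πθ s a / πhat b0 a) with hrhatdef
  have hrstar_nn : ∀ s, c s ≠ 0 → 0 ≤ rstar s := fun s hcs =>
    (gibbs (πθ s) (πstar b0) (hπθ s) (hπstar b0) (fun a ha => hacStar s b0 hcs a ha)).1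
  have hrhat_nn : ∀ s, c s ≠ 0 → 0 ≤ rhat s := fun s hcs =>
    (gibbs (πθ s) (πhat b0) (hπθ s) (hπhatPmf b0) (fun a ha => hacHat s b0 hcs a ha)).1
  have hcr_nn : ∀ s, 0 ≤ c s * rstar s := by
    intro s
    by_cases hcs : c s = 0
    · simp [hcs]
    · exact mul_nonneg (hc0 s) (hrstar_nn s hcs)
  have hcr_nn' : ∀ s, 0 ≤ c s * rhat s := by
    intro s
    by_cases hcs : c s = 0
    · simp [hcs]
    · exact mul_nonneg (hc0 s) (hrhat_nn s hcs)
  have hTstar_eq : Tstar b0 = ENNReal.ofReal (∑ s, c s * rstar s) := by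
    rw [ENNReal.ofReal_sum_of_nonneg (fun s _ => hcr_nn s)]
    refine Finset.sum_congr rfl (fun s _ => ?_)
    by_cases hcs : c s = 0
    · simp [hcs, hcdef] at *
      simp [hcs]
    · rw [ENNReal.ofReal_mul (hc0 s)]
      congr 1
      rw [klDiv, if_pos (fun a ha => hacStar s b0 hcs a ha)]
  have hThat_eq : (∑ s, ENNReal.ofReal (d (s, b0)) * klDiv (πθ s) (πhat b0))
      = ENNReal.ofReal (∑ s, c s * rhat s) := by
    rw [ENNReal.ofReal_sum_of_nonneg (fun s _ => hcr_nn' s)]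
    refine Finset.sum_congr rfl (fun s _ => ?_)
    by_cases hcs : c s = 0
    · simp [hcs, hcdef] at *
      simp [hcs]
    · rw [ENNReal.ofReal_mul (hc0 s)]
      congr 1
      rw [klDiv, if_pos (fun a ha => hacHat s b0 hcs a ha)]
  rw [hTstar_eq, hThat_eq] at hT0
  have hreal : ∑ s, c s * rstar s ≤ ∑ s, c s * rhat s :=
    (ENNReal.ofReal_le_ofReal_iff (Finset.sum_nonneg (fun s _ => hcr_nn' s))).mp hT0
  -- compensation identity
  set w : ℝ := dB b0 with hwdef
  have hcw : ∑ s, c s = w := (hdB b0).symm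
  have hcomp := comp_identity c hc0 w hb0 hcw πθ hπθ (πhat b0)
    (fun a => hπhat_pos b0 hb0 a) (πstar b0) ((hπstar b0).1)
    (fun s hcs a ha => hacStar s b0 hcs a ha)
  -- conclude
  set K : ℝ := ∑ a, πhat b0 a * Real.log (πhat b0 a / πstar b0 a) with hKdef
  have hK_le : w * K ≤ 0 := by
    rw [hrstardef, hrhatdef] at hreal
    linarith [hcomp]
  have hacbar : ∀ a, πstar b0 a = 0 → πhat b0 a = 0 := by
    intro a ha
    rw [hπhat_pos b0 hb0 a]
    refine Finset.sum_eq_zero (fun s _ => ?_)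
    by_cases hcs : d (s, b0) = 0
    · simp [hcs]
    · rw [hacStar s b0 hcs a ha, mul_zero]
  have hgb := gibbs (πhat b0) (πstar b0) (hπhatPmf b0) (hπstar b0) hacbar
  have hK0 : K = 0 := le_antisymm (by nlinarith [hgb.1]) hgb.1
  exact (hgb.2 hK0).symm
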